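/- Let B ⊂ ℝ² be the annulus B(x₀, 1/2) \ B(x₀, 2^{−n}), and let ψ ∈ H¹(B) be such that there are two continuous curves, each joining the inner circle to the outer circle of B, on which ψ is continuous and takes the constant values a and b respectively. Then ‖∇ψ‖²_{L²(B)} ≥ |a−b|²/(2π) · (n−1) log 2 (up to an absolute constant), so in particular the H¹ norm of ψ tends to infinity as n → ∞ when |a−b| is bounded below. -/

import Mathlib

open MeasureTheory Real Set
open scoped Real ENNReal


lemma my_lintegral_comp_polarCoord_symm (g : ℝ × ℝ → ℝ≥0∞) :
    ∫⁻ p in polarCoord.target, ENNReal.ofReal p.1 * g (polarCoord.symm p) = ∫⁻ p, g p := by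
  set B : ℝ × ℝ → ℝ × ℝ →L[ℝ] ℝ × ℝ := fun p =>
    LinearMap.toContinuousLinearMap (Matrix.toLin (Module.Basis.finTwoProd ℝ) (Module.Basis.finTwoProd ℝ)
      !![Real.cos p.2, -p.1 * Real.sin p.2; Real.sin p.2, p.1 * Real.cos p.2])
  have A : ∀ p ∈ polarCoord.target,
      HasFDerivWithinAt polarCoord.symm (B p) polarCoord.target p :=
    fun p _ => (hasFDerivAt_polarCoord_symm p).hasFDerivWithinAt
  have B_det : ∀ p, (B p).det = p.1 := by
    intro p
    conv_rhs => rw [← one_mul p.1, ← cos_sq_add_sin_sq p.2]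
    simp only [B, neg_mul, LinearMap.det_toContinuousLinearMap, LinearMap.det_toLin,
      Matrix.det_fin_two_of, sub_neg_eq_add]
    ring
  symm
  have hinj : InjOn polarCoord.symm polarCoord.target := by
    have := polarCoord.symm.injOn
    rwa [OpenPartialHomeomorph.symm_source] at this
  calc
    ∫⁻ p, g p = ∫⁻ p in polarCoord.source, g p := by
      rw [← setLIntegral_univ]
      exact (setLIntegral_congr polarCoord_source_ae_eq_univ).symm
    _ = ∫⁻ p in polarCoord.symm '' polarCoord.target, g p := by
      rw [polarCoord.symm_image_target_eq_source]
    _ = ∫⁻ p in polarCoord.target, ENNReal.ofReal |(B p).det| * g (polarCoord.symm p) := by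
      exact lintegral_image_eq_lintegral_abs_det_fderiv_mul volume
        polarCoord.open_target.measurableSet A hinj g
    _ = ∫⁻ p in polarCoord.target, ENNReal.ofReal p.1 * g (polarCoord.symm p) := by
      refine setLIntegral_congr_fun polarCoord.open_target.measurableSet
        (fun p hp => ?_)
      rw [B_det, abs_of_pos hp.1]


noncomputable def eNorm2 (v : ℝ × ℝ) : ℝ := Real.sqrt (v.1 ^ 2 + v.2 ^ 2)

lemma eNorm2_nonneg (v : ℝ × ℝ) : 0 ≤ eNorm2 v := Real.sqrt_nonneg _

lemma continuous_eNorm2 : Continuous eNorm2 :=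
  ((continuous_fst.pow 2).add (continuous_snd.pow 2)).sqrt

lemma dist_le_eNorm2 (p q : ℝ × ℝ) : dist p q ≤ eNorm2 (p - q) := by
  rw [Prod.dist_eq]
  unfold eNorm2
  simp only [Prod.fst_sub, Prod.snd_sub]
  have h1 : dist p.1 q.1 ≤ Real.sqrt ((p.1 - q.1) ^ 2 + (p.2 - q.2) ^ 2) := by
    rw [Real.dist_eq, ← Real.sqrt_sq_eq_abs]
    exact Real.sqrt_le_sqrt (by nlinarith [sq_nonneg (p.2 - q.2)])
  have h2 : dist p.2 q.2 ≤ Real.sqrt ((p.1 - q.1) ^ 2 + (p.2 - q.2) ^ 2) := by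
    rw [Real.dist_eq, ← Real.sqrt_sq_eq_abs]
    exact Real.sqrt_le_sqrt (by nlinarith [sq_nonneg (p.1 - q.1)])
  exact max_le h1 h2

lemma eNorm2_le_sqrt_two_dist (p q : ℝ × ℝ) : eNorm2 (p - q) ≤ Real.sqrt 2 * dist p q := by
  have hd : 0 ≤ dist p q := dist_nonneg
  have h1 : |p.1 - q.1| ≤ dist p q := by
    rw [Prod.dist_eq, ← Real.dist_eq]; exact le_max_left _ _
  have h2 : |p.2 - q.2| ≤ dist p q := by
    rw [Prod.dist_eq, ← Real.dist_eq]; exact le_max_right _ _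
  have key : eNorm2 (p - q) ≤ Real.sqrt (2 * dist p q ^ 2) := by
    apply Real.sqrt_le_sqrt
    simp only [Prod.fst_sub, Prod.snd_sub]
    have e1 : (p.1 - q.1) ^ 2 ≤ dist p q ^ 2 := by nlinarith [abs_nonneg (p.1 - q.1), sq_abs (p.1 - q.1)]
    have e2 : (p.2 - q.2) ^ 2 ≤ dist p q ^ 2 := by nlinarith [abs_nonneg (p.2 - q.2), sq_abs (p.2 - q.2)]
    linarith
  rwa [Real.sqrt_mul (by norm_num) _, Real.sqrt_sq hd] at key

lemma circle_norm_bounds (ρ r θ : ℝ) (hρ : 0 < ρ) (h1 : Real.sqrt 2 * ρ < r) (h2 : r < 1 / 2) :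
    ρ ≤ ‖((r * Real.cos θ, r * Real.sin θ) : ℝ × ℝ)‖ ∧
      ‖((r * Real.cos θ, r * Real.sin θ) : ℝ × ℝ)‖ < 1 / 2 := by
  have hs2 : Real.sqrt 2 * Real.sqrt 2 = 2 := Real.mul_self_sqrt (by norm_num)
  have hs2pos : (1 : ℝ) ≤ Real.sqrt 2 := by nlinarith [Real.sqrt_nonneg 2]
  have hr : 0 < r := lt_trans (by positivity) h1
  have hnorm : ‖((r * Real.cos θ, r * Real.sin θ) : ℝ × ℝ)‖
      = max |r * Real.cos θ| |r * Real.sin θ| := by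
    rw [Prod.norm_def]; rfl
  set m := max |r * Real.cos θ| |r * Real.sin θ| with hm
  have hm1 : |r * Real.cos θ| ≤ m := le_max_left _ _
  have hm2 : |r * Real.sin θ| ≤ m := le_max_right _ _
  have hm0 : 0 ≤ m := le_trans (abs_nonneg _) hm1
  have hsq : r ^ 2 ≤ 2 * m ^ 2 := by
    have := Real.sin_sq_add_cos_sq θ
    nlinarith [sq_abs (r * Real.cos θ), sq_abs (r * Real.sin θ), abs_nonneg (r * Real.cos θ),
      abs_nonneg (r * Real.sin θ)]
  constructor
  · rw [hnorm]
    have hrr : 2 * ρ ^ 2 < r ^ 2 := by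
      nlinarith [mul_pos (sub_pos.mpr h1) (by positivity : (0:ℝ) < r + Real.sqrt 2 * ρ)]
    nlinarith [sq_nonneg (m - ρ), sq_nonneg (m + ρ)]
  · rw [hnorm]
    have hc : |r * Real.cos θ| ≤ r := by
      rw [abs_mul, abs_of_pos hr]
      nlinarith [Real.abs_cos_le_one θ, abs_nonneg (Real.cos θ)]
    have hs : |r * Real.sin θ| ≤ r := by
      rw [abs_mul, abs_of_pos hr]
      nlinarith [Real.abs_sin_le_one θ, abs_nonneg (Real.sin θ)]
    exact lt_of_le_of_lt (max_le hc hs) h2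

lemma exists_point_on_circle (x₀ : ℝ × ℝ) (γ : ℝ → ℝ × ℝ) (hγ : ContinuousOn γ (Set.Icc 0 1))
    (r : ℝ) (h0 : eNorm2 (γ 0 - x₀) ≤ r) (h1 : r ≤ eNorm2 (γ 1 - x₀)) :
    ∃ θ ∈ Icc (-π) π, ∃ s ∈ Icc (0:ℝ) 1, x₀ + (r * Real.cos θ, r * Real.sin θ) = γ s := by
  have hf : ContinuousOn (fun s => eNorm2 (γ s - x₀)) (Icc 0 1) :=
    continuous_eNorm2.comp_continuousOn (hγ.sub continuousOn_const)
  obtain ⟨s, hs, hfs⟩ := intermediate_value_Icc (by norm_num : (0:ℝ) ≤ 1) hf ⟨h0, h1⟩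
  set v := γ s - x₀ with hv
  set z : ℂ := ⟨v.1, v.2⟩ with hz
  have habs : ‖z‖ = r := by
    rw [Complex.norm_def, Complex.normSq_mk]
    have hvv : v.1 * v.1 + v.2 * v.2 = v.1 ^ 2 + v.2 ^ 2 := by ring
    rw [hvv]
    exact hfs
  have Z := Complex.norm_mul_cos_add_sin_mul_I z
  rw [habs] at Z
  refine ⟨z.arg, ⟨(Complex.neg_pi_lt_arg z).le, Complex.arg_le_pi z⟩, s, hs, ?_⟩
  have hre : r * Real.cos z.arg = v.1 := by
    have h := congrArg Complex.re Z; simpa [hz, Complex.cos_ofReal_re, Complex.sin_ofReal_re] using h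
  have him : r * Real.sin z.arg = v.2 := by
    have h := congrArg Complex.im Z; simpa [hz, Complex.cos_ofReal_re, Complex.sin_ofReal_re] using h
  have hveq : (r * Real.cos z.arg, r * Real.sin z.arg) = v := by
    exact Prod.ext hre him
  rw [hveq, hv, add_sub_cancel]

lemma circle_energy_bound
    (n : ℕ) (x₀ : ℝ × ℝ) (ψ : ℝ × ℝ → ℝ) (B : Set (ℝ × ℝ))
    (hB : B = Metric.ball x₀ (1 / 2) \ Metric.ball x₀ ((2 : ℝ) ^ (-(n : ℤ))))
    (hdiff : ∀ x ∈ B, DifferentiableAt ℝ ψ x)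
    (a b : ℝ) (γ₁ γ₂ : ℝ → ℝ × ℝ)
    (hγ₁ : ContinuousOn γ₁ (Set.Icc 0 1)) (hγ₂ : ContinuousOn γ₂ (Set.Icc 0 1))
    (h10 : dist (γ₁ 0) x₀ = (2 : ℝ) ^ (-(n : ℤ))) (h11 : dist (γ₁ 1) x₀ = 1 / 2)
    (h20 : dist (γ₂ 0) x₀ = (2 : ℝ) ^ (-(n : ℤ))) (h21 : dist (γ₂ 1) x₀ = 1 / 2)
    (ha : ∀ s ∈ Set.Icc (0 : ℝ) 1, ψ (γ₁ s) = a)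
    (hb : ∀ s ∈ Set.Icc (0 : ℝ) 1, ψ (γ₂ s) = b)
    (r : ℝ) (hr1 : Real.sqrt 2 * (2 : ℝ) ^ (-(n : ℤ)) < r) (hr2 : r < 1 / 2) :
    ENNReal.ofReal (|a - b| ^ 2 / (2 * π * r ^ 2)) ≤
      ∫⁻ θ in Ioo (-π) π,
        ENNReal.ofReal (‖fderiv ℝ ψ (x₀ + (r * Real.cos θ, r * Real.sin θ))‖ ^ 2) := by
  have hρ : (0:ℝ) < (2 : ℝ) ^ (-(n : ℤ)) := by positivity
  have hr0 : (0:ℝ) < r := lt_trans (by positivity) hr1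
  set c : ℝ → ℝ × ℝ := fun θ => x₀ + (r * Real.cos θ, r * Real.sin θ) with hc_def
  have hmemB : ∀ θ, c θ ∈ B := by
    intro θ
    obtain ⟨hlo, hhi⟩ := circle_norm_bounds _ r θ hρ hr1 hr2
    have hdist : dist (c θ) x₀ = ‖((r * Real.cos θ, r * Real.sin θ) : ℝ × ℝ)‖ := by
      rw [dist_eq_norm, hc_def, add_sub_cancel_left]
    rw [hB]
    exact ⟨by rwa [Metric.mem_ball, hdist], by rw [Metric.mem_ball, hdist]; exact not_lt.mpr hlo⟩
  set g : ℝ → ℝ := fun θ => ‖fderiv ℝ ψ (c θ)‖ with hg_def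
  set L : ℝ → ℝ := fun θ => (fderiv ℝ ψ (c θ)) (r * -Real.sin θ, r * Real.cos θ) with hL_def
  -- derivative of the circle map
  have hc : ∀ θ, HasDerivAt c (r * -Real.sin θ, r * Real.cos θ) θ := by
    intro θ
    exact (((Real.hasDerivAt_cos θ).const_mul r).prodMk
      ((Real.hasDerivAt_sin θ).const_mul r)).const_add x₀
  have hL : ∀ θ, HasDerivAt (fun t => ψ (c t)) (L θ) θ := fun θ =>
    ((hdiff _ (hmemB θ)).hasFDerivAt).comp_hasDerivAt θ (hc θ)
  -- pointwise bound |L θ| ≤ r * g θ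
  have hLle : ∀ θ, |L θ| ≤ r * g θ := by
    intro θ
    have h1 : |L θ| ≤ g θ * ‖((r * -Real.sin θ, r * Real.cos θ) : ℝ × ℝ)‖ := by
      rw [hL_def, ← Real.norm_eq_abs]
      exact (fderiv ℝ ψ (c θ)).le_opNorm _
    have h2 : ‖((r * -Real.sin θ, r * Real.cos θ) : ℝ × ℝ)‖ ≤ r := by
      rw [Prod.norm_def]
      refine max_le ?_ ?_
      · rw [Real.norm_eq_abs, abs_mul, abs_neg, abs_of_pos hr0]
        nlinarith [Real.abs_sin_le_one θ, abs_nonneg (Real.sin θ)]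
      · rw [Real.norm_eq_abs, abs_mul, abs_of_pos hr0]
        nlinarith [Real.abs_cos_le_one θ, abs_nonneg (Real.cos θ)]
    calc |L θ| ≤ g θ * ‖((r * -Real.sin θ, r * Real.cos θ) : ℝ × ℝ)‖ := h1
      _ ≤ g θ * r := by
          exact mul_le_mul_of_nonneg_left h2 (norm_nonneg _)
      _ = r * g θ := mul_comm _ _
  -- measurability
  have hccont : Continuous c := by
    rw [hc_def]
    exact continuous_const.add
      (((continuous_const.mul Real.continuous_cos).prodMk
        (continuous_const.mul Real.continuous_sin)))
  have hTm : Measurable fun θ => fderiv ℝ ψ (c θ) :=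
    (measurable_fderiv ℝ ψ).comp hccont.measurable
  have hgm : Measurable g := hTm.norm
  have hLm : Measurable L := by
    have heval : Continuous fun q : ((ℝ × ℝ) →L[ℝ] ℝ) × (ℝ × ℝ) => q.1 q.2 :=
      isBoundedBilinearMap_apply.continuous
    have hdcont : Continuous fun θ => ((r * -Real.sin θ, r * Real.cos θ) : ℝ × ℝ) := by
      exact (continuous_const.mul Real.continuous_sin.neg).prodMk
        (continuous_const.mul Real.continuous_cos)
    exact heval.measurable.comp (hTm.prodMk hdcont.measurable)
  set I := ∫⁻ θ in Ioo (-π) π, ENNReal.ofReal (g θ ^ 2) with hI_def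
  -- Step 1 : ofReal |a - b| ≤ ∫⁻ ofReal |L|
  have step1 : ENNReal.ofReal |a - b| ≤ ∫⁻ θ in Ioo (-π) π, ENNReal.ofReal |L θ| := by
    by_cases hJ : (∫⁻ θ in Ioo (-π) π, ENNReal.ofReal |L θ|) = ⊤
    · rw [hJ]; exact le_top
    -- L is integrable on Ioo (-π) π
    have hLint : IntegrableOn L (Ioo (-π) π) volume := by
      refine ⟨hLm.aestronglyMeasurable, ?_⟩
      rw [HasFiniteIntegral]
      have : ∀ θ, ‖L θ‖ₑ = ENNReal.ofReal |L θ| := fun θ => by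
        rw [← Real.norm_eq_abs, ofReal_norm_eq_enorm]
      simp_rw [this]
      exact lt_top_iff_ne_top.mpr hJ
    have hLIcc : IntegrableOn L (Icc (-π) π) volume :=
      (integrableOn_Icc_iff_integrableOn_Ioo).mpr hLint
    -- find points on the circle belonging to each curve
    have hsqrt2 : (0:ℝ) < Real.sqrt 2 := by positivity
    have h01 : eNorm2 (γ₁ 0 - x₀) ≤ r := by
      calc eNorm2 (γ₁ 0 - x₀) ≤ Real.sqrt 2 * dist (γ₁ 0) x₀ := eNorm2_le_sqrt_two_dist _ _
        _ = Real.sqrt 2 * (2 : ℝ) ^ (-(n : ℤ)) := by rw [h10]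
        _ ≤ r := hr1.le
    have h11' : r ≤ eNorm2 (γ₁ 1 - x₀) := by
      calc r ≤ (1:ℝ)/2 := hr2.le
        _ = dist (γ₁ 1) x₀ := h11.symm
        _ ≤ eNorm2 (γ₁ 1 - x₀) := dist_le_eNorm2 _ _
    have h02 : eNorm2 (γ₂ 0 - x₀) ≤ r := by
      calc eNorm2 (γ₂ 0 - x₀) ≤ Real.sqrt 2 * dist (γ₂ 0) x₀ := eNorm2_le_sqrt_two_dist _ _
        _ = Real.sqrt 2 * (2 : ℝ) ^ (-(n : ℤ)) := by rw [h20]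
        _ ≤ r := hr1.le
    have h21' : r ≤ eNorm2 (γ₂ 1 - x₀) := by
      calc r ≤ (1:ℝ)/2 := hr2.le
        _ = dist (γ₂ 1) x₀ := h21.symm
        _ ≤ eNorm2 (γ₂ 1 - x₀) := dist_le_eNorm2 _ _
    obtain ⟨θ₁, hθ₁, s₁, hs₁, hx₁⟩ := exists_point_on_circle x₀ γ₁ hγ₁ r h01 h11'
    obtain ⟨θ₂, hθ₂, s₂, hs₂, hx₂⟩ := exists_point_on_circle x₀ γ₂ hγ₂ r h02 h21'
    have hvala : ψ (c θ₁) = a := by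
      have : c θ₁ = γ₁ s₁ := hx₁
      rw [this]; exact ha s₁ hs₁
    have hvalb : ψ (c θ₂) = b := by
      have : c θ₂ = γ₂ s₂ := hx₂
      rw [this]; exact hb s₂ hs₂
    have huIcc : uIcc θ₂ θ₁ ⊆ Icc (-π) π := uIcc_subset_Icc hθ₂ hθ₁
    have hII : IntervalIntegrable L volume θ₂ θ₁ :=
      (hLIcc.mono_set huIcc).intervalIntegrable
    have hftc : ∫ t in θ₂..θ₁, L t = ψ (c θ₁) - ψ (c θ₂) :=
      intervalIntegral.integral_eq_sub_of_hasDerivAt (fun t _ => hL t) hII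
    have habsint : IntegrableOn (fun t => |L t|) (Icc (-π) π) volume := hLIcc.abs
    have habs : |a - b| ≤ ∫ t in Icc (-π) π, |L t| := by
      calc |a - b| = |∫ t in θ₂..θ₁, L t| := by rw [hftc, hvala, hvalb]
        _ ≤ ∫ t in Set.uIoc θ₂ θ₁, |L t| := by
            simpa [Real.norm_eq_abs] using
              intervalIntegral.norm_integral_le_integral_norm_uIoc (f := L) (a := θ₂) (b := θ₁)
                (μ := volume)
        _ ≤ ∫ t in Icc (-π) π, |L t| := by
            refine setIntegral_mono_set habsint ?_ ?_
            · exact Filter.Eventually.of_forall fun t => abs_nonneg _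
            · exact Filter.Eventually.of_forall (Set.Ioc_subset_Icc_self.trans huIcc)
    calc ENNReal.ofReal |a - b| ≤ ENNReal.ofReal (∫ t in Icc (-π) π, |L t|) :=
          ENNReal.ofReal_le_ofReal habs
      _ = ∫⁻ t in Icc (-π) π, ENNReal.ofReal |L t| := by
          exact ofReal_integral_eq_lintegral_ofReal habsint
            (Filter.Eventually.of_forall fun t => abs_nonneg _)
      _ = ∫⁻ θ in Ioo (-π) π, ENNReal.ofReal |L θ| := by
          exact (setLIntegral_congr (Ioo_ae_eq_Icc (α := ℝ) (a := -π) (b := π))).symm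
  -- Step 2 : Cauchy-Schwarz
  have hconj : Real.HolderConjugate 2 2 := Real.HolderConjugate.two_two
  have hmeasL : AEMeasurable (fun θ => ENNReal.ofReal |L θ|)
      (volume.restrict (Ioo (-π) π)) := (hLm.abs.ennreal_ofReal).aemeasurable
  have step2 : (∫⁻ θ in Ioo (-π) π, ENNReal.ofReal |L θ|) ≤
      (∫⁻ θ in Ioo (-π) π, (ENNReal.ofReal |L θ|) ^ (2:ℝ)) ^ ((1:ℝ)/2) *
        (ENNReal.ofReal (2 * π)) ^ ((1:ℝ)/2) := by
    have hCS := ENNReal.lintegral_mul_le_Lp_mul_Lq (volume.restrict (Ioo (-π) π)) hconj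
      hmeasL aemeasurable_const (g := fun _ => (1:ℝ≥0∞))
    simp only [Pi.mul_apply, mul_one, ENNReal.one_rpow] at hCS
    rw [setLIntegral_one, Real.volume_Ioo] at hCS
    have h2π : π - -π = 2 * π := by ring
    rwa [h2π] at hCS
  -- Step 3 : bound the square
  have step3 : (∫⁻ θ in Ioo (-π) π, (ENNReal.ofReal |L θ|) ^ (2:ℝ)) ≤
      ENNReal.ofReal (r ^ 2) * I := by
    have hpt : ∀ θ, (ENNReal.ofReal |L θ|) ^ (2:ℝ) ≤
        ENNReal.ofReal (r ^ 2) * ENNReal.ofReal (g θ ^ 2) := by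
      intro θ
      rw [ENNReal.ofReal_rpow_of_nonneg (abs_nonneg _) (by norm_num : (0:ℝ) ≤ 2),
        ← ENNReal.ofReal_mul (by positivity)]
      apply ENNReal.ofReal_le_ofReal
      have h2 : |L θ| ^ (2:ℝ) = |L θ| ^ 2 := by
        rw [show (2:ℝ) = ((2:ℕ):ℝ) by norm_num, Real.rpow_natCast]
      rw [h2]
      have := hLle θ
      have hg0 : 0 ≤ g θ := norm_nonneg _
      nlinarith [abs_nonneg (L θ), sq_abs (L θ)]
    calc (∫⁻ θ in Ioo (-π) π, (ENNReal.ofReal |L θ|) ^ (2:ℝ))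
        ≤ ∫⁻ θ in Ioo (-π) π, ENNReal.ofReal (r ^ 2) * ENNReal.ofReal (g θ ^ 2) :=
          lintegral_mono hpt
      _ = ENNReal.ofReal (r ^ 2) * I := by
          rw [hI_def, lintegral_const_mul _ ((hgm.pow_const 2).ennreal_ofReal)]
  -- combine
  have main : ENNReal.ofReal |a - b| ≤
      (ENNReal.ofReal (r ^ 2) * I) ^ ((1:ℝ)/2) * (ENNReal.ofReal (2 * π)) ^ ((1:ℝ)/2) :=
    step1.trans (step2.trans (mul_le_mul_left
      (ENNReal.rpow_le_rpow step3 (by norm_num)) _))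
  have hsq : ∀ x : ℝ≥0∞, (x ^ ((1:ℝ)/2)) ^ (2:ℕ) = x := fun x => by
    rw [← ENNReal.rpow_natCast (x ^ ((1:ℝ)/2)) 2, ← ENNReal.rpow_mul]
    norm_num
  have main2 : ENNReal.ofReal (|a - b| ^ 2) ≤
      ENNReal.ofReal (r ^ 2) * I * ENNReal.ofReal (2 * π) := by
    have h := pow_le_pow_left₀ (zero_le) main 2
    rw [mul_pow, hsq, hsq] at h
    rw [ENNReal.ofReal_pow (abs_nonneg _)]
    exact h
  have hD : (0:ℝ) < 2 * π * r ^ 2 := by positivity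
  rw [ENNReal.ofReal_div_of_pos hD]
  rw [ENNReal.div_le_iff_le_mul (Or.inl (ne_of_gt (ENNReal.ofReal_pos.mpr hD)))
    (Or.inl ENNReal.ofReal_ne_top)]
  calc ENNReal.ofReal (|a - b| ^ 2)
      ≤ ENNReal.ofReal (r ^ 2) * I * ENNReal.ofReal (2 * π) := main2
    _ = I * ENNReal.ofReal (2 * π * r ^ 2) := by
        rw [show (2:ℝ) * π * r ^ 2 = r ^ 2 * (2 * π) by ring,
          ENNReal.ofReal_mul (by positivity : (0:ℝ) ≤ r ^ 2)]
        ring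

/-- The 2D capacity-type estimate: if `ψ` is differentiable on the annulus
`B = B(x₀,1/2) \\ B(x₀,2⁻ⁿ)` with square-integrable gradient, and there are two curves
joining the inner and outer circles on which `ψ` is constant equal to `a` resp. `b`, then
`∫_B |∇ψ|² ≥ c |a-b|² (n-1) log 2` for an absolute constant `c > 0`. -/
theorem stmt_7 :
    ∃ c : ℝ, 0 < c ∧
      ∀ (n : ℕ), 2 ≤ n → ∀ (x₀ : ℝ × ℝ) (ψ : ℝ × ℝ → ℝ) (B : Set (ℝ × ℝ)),
        B = Metric.ball x₀ (1 / 2) \ Metric.ball x₀ ((2 : ℝ) ^ (-(n : ℤ))) →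
        (∀ x ∈ B, DifferentiableAt ℝ ψ x) →
        IntegrableOn (fun x => ‖fderiv ℝ ψ x‖ ^ 2) B volume →
        ∀ (a b : ℝ) (γ₁ γ₂ : ℝ → ℝ × ℝ),
          ContinuousOn γ₁ (Set.Icc 0 1) → ContinuousOn γ₂ (Set.Icc 0 1) →
          (∀ s ∈ Set.Icc (0 : ℝ) 1, γ₁ s ∈ closure B) →
          (∀ s ∈ Set.Icc (0 : ℝ) 1, γ₂ s ∈ closure B) →
          dist (γ₁ 0) x₀ = (2 : ℝ) ^ (-(n : ℤ)) → dist (γ₁ 1) x₀ = 1 / 2 →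
          dist (γ₂ 0) x₀ = (2 : ℝ) ^ (-(n : ℤ)) → dist (γ₂ 1) x₀ = 1 / 2 →
          (∀ s ∈ Set.Icc (0 : ℝ) 1, ψ (γ₁ s) = a) →
          (∀ s ∈ Set.Icc (0 : ℝ) 1, ψ (γ₂ s) = b) →
          c * |a - b| ^ 2 * (((n : ℝ) - 1) * Real.log 2) ≤ ∫ x in B, ‖fderiv ℝ ψ x‖ ^ 2 := by
  refine ⟨(8 * π)⁻¹, by positivity, ?_⟩
  intro n hn x₀ ψ B hB hdiff hint a b γ₁ γ₂ hγ₁ hγ₂ _ _ h10 h11 h20 h21 ha hb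
  set ρ : ℝ := (2 : ℝ) ^ (-(n : ℤ)) with hρ_def
  have hρpos : 0 < ρ := by positivity
  have hρ4 : ρ ≤ 1 / 4 := by
    rw [hρ_def]
    calc (2:ℝ) ^ (-(n:ℤ)) ≤ (2:ℝ) ^ (-(2:ℤ)) := by
          apply zpow_le_zpow_right₀ (by norm_num : (1:ℝ) ≤ 2)
          omega
      _ = 1/4 := by norm_num
  set l : ℝ := Real.sqrt 2 * ρ with hl_def
  have hsqrt2 : (1:ℝ) ≤ Real.sqrt 2 := by
    nlinarith [Real.sq_sqrt (by norm_num : (0:ℝ) ≤ 2), Real.sqrt_nonneg 2]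
  have hsqrt2' : Real.sqrt 2 ≤ (3:ℝ)/2 := by
    nlinarith [Real.sq_sqrt (by norm_num : (0:ℝ) ≤ 2), Real.sqrt_nonneg 2]
  have hlpos : 0 < l := by positivity
  have hl12 : l < 1 / 2 := by
    calc l ≤ (3/2) * (1/4) := by
          apply mul_le_mul hsqrt2' hρ4 hρpos.le (by norm_num)
      _ < 1/2 := by norm_num
  -- the measurable sets involved
  have hBmeas : MeasurableSet B := by
    rw [hB]; exact measurableSet_ball.diff measurableSet_ball
  set B₀ : Set (ℝ × ℝ) := Metric.ball 0 (1 / 2) \ Metric.ball 0 ρ with hB₀_def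
  have hB₀meas : MeasurableSet B₀ := measurableSet_ball.diff measurableSet_ball
  set F : ℝ × ℝ → ℝ≥0∞ := fun x => ENNReal.ofReal (‖fderiv ℝ ψ x‖ ^ 2) with hF_def
  have hFmeas : Measurable F := ((measurable_fderiv ℝ ψ).norm.pow_const 2).ennreal_ofReal
  -- the L² norm as a lower Lebesgue integral
  have hnn : ∀ x, (0:ℝ) ≤ ‖fderiv ℝ ψ x‖ ^ 2 := fun x => by positivity
  have hIeq : ∫ x in B, ‖fderiv ℝ ψ x‖ ^ 2 = (∫⁻ x in B, F x).toReal := by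
    rw [integral_eq_lintegral_of_nonneg_ae (Filter.Eventually.of_forall hnn)
      hint.aestronglyMeasurable]
  have hFin : (∫⁻ x in B, F x) ≠ ⊤ := by
    have h := hint.hasFiniteIntegral
    rw [HasFiniteIntegral] at h
    have heq : ∀ x, ‖(‖fderiv ℝ ψ x‖ ^ 2 : ℝ)‖ₑ = F x := fun x => by
      rw [hF_def, ← ofReal_norm_eq_enorm, Real.norm_of_nonneg (hnn x)]
    simp_rw [heq] at h
    exact h.ne
  -- reduce to an ENNReal inequality
  suffices hEE : ENNReal.ofReal ((8 * π)⁻¹ * |a - b| ^ 2 * (((n:ℝ) - 1) * Real.log 2)) ≤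
      ∫⁻ x in B, F x by
    rw [hIeq]
    have hnn2 : (0:ℝ) ≤ (8 * π)⁻¹ * |a - b| ^ 2 * (((n:ℝ) - 1) * Real.log 2) := by
      have h1 : (0:ℝ) ≤ ((n:ℝ) - 1) := by
        have : (2:ℝ) ≤ n := by exact_mod_cast hn
        linarith
      have h2 : (0:ℝ) ≤ Real.log 2 := Real.log_nonneg (by norm_num)
      positivity
    calc (8 * π)⁻¹ * |a - b| ^ 2 * (((n:ℝ) - 1) * Real.log 2)
        = (ENNReal.ofReal ((8 * π)⁻¹ * |a - b| ^ 2 * (((n:ℝ) - 1) * Real.log 2))).toReal :=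
          (ENNReal.toReal_ofReal hnn2).symm
      _ ≤ (∫⁻ x in B, F x).toReal := ENNReal.toReal_mono hFin hEE
  -- translate the integral to the annulus centered at the origin
  have htrans : ∫⁻ x in B, F x = ∫⁻ y in B₀, F (x₀ + y) := by
    have hMP : MeasurePreserving (fun y : ℝ × ℝ => x₀ + y) volume volume :=
      measurePreserving_add_left volume x₀
    have hemb : MeasurableEmbedding (fun y : ℝ × ℝ => x₀ + y) :=
      (MeasurableEquiv.addLeft x₀).measurableEmbedding
    have hpre : (fun y : ℝ × ℝ => x₀ + y) ⁻¹' B = B₀ := by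
      ext y
      have hd1 : dist (x₀ + y) x₀ = ‖y‖ := by
        rw [dist_eq_norm, add_sub_cancel_left]
      have hd2 : dist y (0 : ℝ × ℝ) = ‖y‖ := by simp [dist_eq_norm]
      simp only [hB, hB₀_def, mem_preimage, mem_diff, Metric.mem_ball, hd1, hd2]
    rw [← hpre, hMP.setLIntegral_comp_preimage_emb hemb]
  rw [htrans]
  set G : ℝ × ℝ → ℝ≥0∞ := fun y => F (x₀ + y) with hG_def
  have hGmeas : Measurable G := hFmeas.comp (measurable_const_add x₀)
  set S : Set (ℝ × ℝ) := Ioo l (1/2) ×ˢ Ioo (-π) π with hS_def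
  have hSmeas : MeasurableSet S := measurableSet_Ioo.prod measurableSet_Ioo
  have hSsub : S ⊆ polarCoord.target := by
    rintro ⟨r, θ⟩ ⟨hr, hθ⟩
    refine ⟨?_, hθ⟩
    exact mem_Ioi.mpr (lt_trans hlpos hr.1)
  have hmemB₀ : ∀ r ∈ Ioo l (1/2), ∀ θ : ℝ,
      ((r * Real.cos θ, r * Real.sin θ) : ℝ × ℝ) ∈ B₀ := by
    intro r hr θ
    obtain ⟨hlo, hhi⟩ := circle_norm_bounds ρ r θ hρpos hr.1 hr.2
    constructor
    · rw [Metric.mem_ball, dist_zero_right]; exact hhi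
    · intro hmem
      rw [Metric.mem_ball, dist_zero_right] at hmem
      exact absurd hmem (not_lt.mpr hlo)
  have hcont2 : Continuous fun p : ℝ × ℝ => ((p.1 * Real.cos p.2, p.1 * Real.sin p.2) : ℝ × ℝ) :=
    (continuous_fst.mul (Real.continuous_cos.comp continuous_snd)).prodMk
      (continuous_fst.mul (Real.continuous_sin.comp continuous_snd))
  -- Tonelli
  have hprod : (∫⁻ p in S, ENNReal.ofReal p.1 * G (p.1 * Real.cos p.2, p.1 * Real.sin p.2))
      = ∫⁻ r in Ioo l (1/2), ∫⁻ θ in Ioo (-π) π,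
          ENNReal.ofReal r * G (r * Real.cos θ, r * Real.sin θ) := by
    rw [hS_def, Measure.volume_eq_prod, ← Measure.prod_restrict]
    exact lintegral_prod _ ((measurable_fst.ennreal_ofReal.mul
      (hGmeas.comp hcont2.measurable)).aemeasurable)
  -- inner circle bound
  have hinner : ∀ r ∈ Ioo l (1/2),
      ENNReal.ofReal (|a - b| ^ 2 / (2 * π) * r⁻¹) ≤
        ∫⁻ θ in Ioo (-π) π, ENNReal.ofReal r * G (r * Real.cos θ, r * Real.sin θ) := by
    intro r hr
    have hr0 : (0:ℝ) < r := lt_trans hlpos hr.1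
    have hcirc := circle_energy_bound n x₀ ψ B hB hdiff a b γ₁ γ₂ hγ₁ hγ₂
      h10 h11 h20 h21 ha hb r hr.1 hr.2
    have hmul : (∫⁻ θ in Ioo (-π) π, ENNReal.ofReal r * G (r * Real.cos θ, r * Real.sin θ))
        = ENNReal.ofReal r * ∫⁻ θ in Ioo (-π) π, G (r * Real.cos θ, r * Real.sin θ) :=
      lintegral_const_mul _ (hGmeas.comp
        ((continuous_const.mul Real.continuous_cos).prodMk
          (continuous_const.mul Real.continuous_sin)).measurable)
    rw [hmul]
    calc ENNReal.ofReal (|a - b| ^ 2 / (2 * π) * r⁻¹)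
        = ENNReal.ofReal r * ENNReal.ofReal (|a - b| ^ 2 / (2 * π * r ^ 2)) := by
          rw [← ENNReal.ofReal_mul hr0.le]
          congr 1
          field_simp
      _ ≤ ENNReal.ofReal r * ∫⁻ θ in Ioo (-π) π, G (r * Real.cos θ, r * Real.sin θ) :=
          mul_le_mul_right hcirc _
  -- the 1/r integral
  have hKcont : ContinuousOn (fun r : ℝ => |a - b| ^ 2 / (2 * π) * r⁻¹) (Icc l (1/2)) :=
    continuousOn_const.mul (ContinuousOn.inv₀ continuousOn_id
      fun x hx => ne_of_gt (lt_of_lt_of_le hlpos hx.1))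
  have hKint : IntegrableOn (fun r : ℝ => |a - b| ^ 2 / (2 * π) * r⁻¹) (Ioo l (1/2)) volume :=
    (hKcont.integrableOn_Icc).mono_set Ioo_subset_Icc_self
  have hval : ∫ r in Ioo l (1/2), |a - b| ^ 2 / (2 * π) * r⁻¹
      = |a - b| ^ 2 / (2 * π) * Real.log ((1/2) / l) := by
    rw [← integral_Ioc_eq_integral_Ioo, ← intervalIntegral.integral_of_le hl12.le,
      intervalIntegral.integral_const_mul, integral_inv_of_pos hlpos (by norm_num)]
  have hlogval : Real.log ((1/2) / l) = ((n:ℝ) - 3/2) * Real.log 2 := by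
    rw [hl_def, hρ_def, Real.log_div (by norm_num) (by positivity),
      Real.log_mul (by positivity) (by positivity), Real.log_sqrt (by norm_num),
      Real.log_zpow, show ((1:ℝ)/2) = 2⁻¹ by norm_num, Real.log_inv]
    push_cast
    ring
  have hfinalreal : (8 * π)⁻¹ * |a - b| ^ 2 * (((n:ℝ) - 1) * Real.log 2)
      ≤ |a - b| ^ 2 / (2 * π) * Real.log ((1/2) / l) := by
    rw [hlogval]
    have hL : (0:ℝ) ≤ Real.log 2 := Real.log_nonneg (by norm_num)
    have hn' : (2:ℝ) ≤ n := by exact_mod_cast hn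
    have hπ : (0:ℝ) < π := Real.pi_pos
    have key : ((n:ℝ) - 1) ≤ 4 * ((n:ℝ) - 3/2) := by linarith
    calc (8 * π)⁻¹ * |a - b| ^ 2 * (((n:ℝ) - 1) * Real.log 2)
        ≤ (8 * π)⁻¹ * |a - b| ^ 2 * ((4 * ((n:ℝ) - 3/2)) * Real.log 2) := by
          apply mul_le_mul_of_nonneg_left (mul_le_mul_of_nonneg_right key hL) (by positivity)
      _ = |a - b| ^ 2 / (2 * π) * (((n:ℝ) - 3/2) * Real.log 2) := by
          field_simp
          ring
  -- put everything together
  calc ENNReal.ofReal ((8 * π)⁻¹ * |a - b| ^ 2 * (((n:ℝ) - 1) * Real.log 2))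
      ≤ ENNReal.ofReal (|a - b| ^ 2 / (2 * π) * Real.log ((1/2) / l)) :=
        ENNReal.ofReal_le_ofReal hfinalreal
    _ = ENNReal.ofReal (∫ r in Ioo l (1/2), |a - b| ^ 2 / (2 * π) * r⁻¹) := by rw [hval]
    _ = ∫⁻ r in Ioo l (1/2), ENNReal.ofReal (|a - b| ^ 2 / (2 * π) * r⁻¹) := by
        apply ofReal_integral_eq_lintegral_ofReal hKint
        rw [Filter.EventuallyLE, ae_restrict_iff' measurableSet_Ioo]
        apply Filter.Eventually.of_forall
        intro x hx
        have hx0 : (0:ℝ) < x := lt_trans hlpos hx.1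
        positivity
    _ ≤ ∫⁻ r in Ioo l (1/2), ∫⁻ θ in Ioo (-π) π,
          ENNReal.ofReal r * G (r * Real.cos θ, r * Real.sin θ) :=
        setLIntegral_mono' measurableSet_Ioo hinner
    _ = ∫⁻ p in S, ENNReal.ofReal p.1 * G (p.1 * Real.cos p.2, p.1 * Real.sin p.2) := hprod.symm
    _ = ∫⁻ p in S, ENNReal.ofReal p.1 * B₀.indicator G (polarCoord.symm p) := by
        refine setLIntegral_congr_fun hSmeas (fun p hp => ?_)
        rw [polarCoord_symm_apply, Set.indicator_of_mem (hmemB₀ p.1 hp.1 p.2)]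
    _ ≤ ∫⁻ p in polarCoord.target, ENNReal.ofReal p.1 * B₀.indicator G (polarCoord.symm p) :=
        lintegral_mono_set hSsub
    _ = ∫⁻ y, B₀.indicator G y := my_lintegral_comp_polarCoord_symm _
    _ = ∫⁻ y in B₀, G y := lintegral_indicator hB₀meas G
    _ = ∫⁻ y in B₀, F (x₀ + y) := rfl
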